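/- In a graded connected commutative Hopf algebra H over a field of characteristic zero, if x is in the n-th level of the coradical filtration H^(n) (i.e. the n-fold iterated reduced coproduct Δ^(n) vanishes on x), then the (n+1)-fold convolution power σ_{n+1} = σ^{⋆(n+1)} of σ = S ⋆ P (antipode convolved with the projection onto the augmentation ideal) vanishes on x. -/

import Mathlib

open TensorProduct

variable (K : Type*) [Field K] [CharZero K]
variable (H : Type*) [CommRing H] [HopfAlgebra K H]

/-- The reduced coproduct `Δ' = Δ - 1⊗id - id⊗1`. -/
noncomputable def redComul : H →ₗ[K] H ⊗[K] H :=
  Coalgebra.comul - TensorProduct.mk K H H 1 - (TensorProduct.mk K H H).flip 1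

/-- `H ⊗ (⨂ⁿ H) ≃ ⨂ⁿ⁺¹ H`. -/
noncomputable def tpowSuccEquiv (n : ℕ) :
    (H ⊗[K] (⨂[K]^n H)) ≃ₗ[K] ⨂[K]^(n+1) H :=
  (TensorProduct.congr
      ((PiTensorProduct.subsingletonEquiv (0 : Fin 1)).symm) (LinearEquiv.refl K _)).trans
  ((PiTensorProduct.tmulEquiv K H).trans
    (PiTensorProduct.reindex K (fun _ => H) ((finSumFinEquiv).trans (finCongr (by omega)))))

/-- The iterated reduced coproduct: `DIter 0 = id` (as a map `H → ⨂¹H`) and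
`DIter (n+1) = (id ⊗ DIter n) ∘ Δ'`, so that for `n ≥ 1`, `DIter n = Δ^(n)`. -/
noncomputable def DIter : (n : ℕ) → (H →ₗ[K] ⨂[K]^(n+1) H)
  | 0 => ((PiTensorProduct.subsingletonEquiv (s := fun _ => H) (0 : Fin 1)).symm : H ≃ₗ[K] ⨂[K]^1 H).toLinearMap
  | n+1 => (tpowSuccEquiv K H (n+1)).toLinearMap ∘ₗ
      (LinearMap.lTensor H (DIter n)) ∘ₗ redComul K H

/-- Convolution product of linear endomorphisms of a Hopf algebra. -/
noncomputable def conv (f g : H →ₗ[K] H) : H →ₗ[K] H :=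
  LinearMap.mul' K H ∘ₗ TensorProduct.map f g ∘ₗ Coalgebra.comul

/-- Projection onto the augmentation ideal, `P = id - η ∘ ε`. -/
noncomputable def augProj : H →ₗ[K] H :=
  LinearMap.id - (Algebra.linearMap K H ∘ₗ Coalgebra.counit)

/-- `σ = S ⋆ P`. -/
noncomputable def sigmaMap : H →ₗ[K] H :=
  conv K H (HopfAlgebra.antipode (R := K)) (augProj K H)

/-- Convolution powers `σ^{⋆ j}`, with `σ^{⋆0} = η ∘ ε` the convolution unit. -/
noncomputable def sigmaPow : ℕ → (H →ₗ[K] H)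
  | 0 => Algebra.linearMap K H ∘ₗ Coalgebra.counit
  | j+1 => conv K H (sigmaMap K H) (sigmaPow j)


-- Auxiliary lemmas -------------------------------------------------------

lemma conv_apply (f g : H →ₗ[K] H) (x : H) :
    conv K H f g x = LinearMap.mul' K H (TensorProduct.map f g (Coalgebra.comul x)) := rfl

lemma augProj_one : augProj K H 1 = 0 := by
  simp [augProj, Bialgebra.counit_one]

lemma sigmaMap_one : sigmaMap K H 1 = 0 := by
  simp [sigmaMap, conv_apply, Bialgebra.comul_one, Algebra.TensorProduct.one_def,
    augProj_one]

lemma sigmaPow_succ_one (j : ℕ) : sigmaPow K H (j + 1) 1 = 0 := by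
  simp [sigmaPow, conv_apply, Bialgebra.comul_one, Algebra.TensorProduct.one_def,
    sigmaMap_one]

lemma comul_eq_redComul (x : H) :
    Coalgebra.comul (R := K) x = redComul K H x + 1 ⊗ₜ[K] x + x ⊗ₜ[K] 1 := by
  simp [redComul]
  abel

lemma conv_sigma_apply (g : H →ₗ[K] H) (hg : g 1 = 0) (x : H) :
    conv K H (sigmaMap K H) g x
      = LinearMap.mul' K H (TensorProduct.map (sigmaMap K H) g (redComul K H x)) := by
  rw [conv_apply, comul_eq_redComul]
  simp [sigmaMap_one, hg]

lemma tensor_map_eq_zero {N : Type*} [AddCommGroup N] [Module K N]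
    (f : H →ₗ[K] N) (g h : H →ₗ[K] H)
    (hgh : ∀ y, f y = 0 → h y = 0) (t : H ⊗[K] H)
    (ht : LinearMap.lTensor H f t = 0) : TensorProduct.map g h t = 0 := by
  have hexact := Module.Flat.lTensor_exact H (f := (LinearMap.ker f).subtype) (g := f)
    (LinearMap.exact_subtype_ker_map f)
  obtain ⟨s, hs⟩ := (hexact t).mp ht
  have hcomp : TensorProduct.map g h ∘ₗ LinearMap.lTensor H (LinearMap.ker f).subtype
      = TensorProduct.map g (h ∘ₗ (LinearMap.ker f).subtype) := by
    rw [LinearMap.lTensor, ← TensorProduct.map_comp]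
    simp
  have hzero : h ∘ₗ (LinearMap.ker f).subtype = 0 := by
    ext ⟨y, hy⟩; exact hgh y hy
  calc TensorProduct.map g h t = (TensorProduct.map g h ∘ₗ
        LinearMap.lTensor H (LinearMap.ker f).subtype) s := by rw [LinearMap.comp_apply, hs]
    _ = TensorProduct.map g (h ∘ₗ (LinearMap.ker f).subtype) s := by rw [hcomp]
    _ = 0 := by
      rw [hzero]
      have hz : TensorProduct.map g (0 : (LinearMap.ker f) →ₗ[K] H) = 0 :=
        TensorProduct.ext' (fun y z => by simp)
      rw [hz]; rfl

theorem sigmaPow_key (n : ℕ) : ∀ x : H, DIter K H n x = 0 → sigmaPow K H (n + 1) x = 0 := by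
  induction n with
  | zero =>
    intro x hx
    have hx0 : x = 0 :=
      ((PiTensorProduct.subsingletonEquiv (0 : Fin 1) (R := K) (s := fun _ => H)).symm.map_eq_zero_iff).mp hx
    simp [hx0]
  | succ n ih =>
    intro x hx
    have h1 : LinearMap.lTensor H (DIter K H n) (redComul K H x) = 0 :=
      ((tpowSuccEquiv K H (n + 1)).map_eq_zero_iff).mp hx
    have h2 : TensorProduct.map (sigmaMap K H) (sigmaPow K H (n + 1)) (redComul K H x) = 0 :=
      tensor_map_eq_zero K H (DIter K H n) (sigmaMap K H) (sigmaPow K H (n + 1)) ih _ h1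
    show conv K H (sigmaMap K H) (sigmaPow K H (n + 1)) x = 0
    rw [conv_sigma_apply K H _ (sigmaPow_succ_one K H n), h2, map_zero]

variable (𝒜 : ℕ → Submodule K H)

/-- The coproduct is compatible with the grading:
`Δ(𝒜 n) ⊆ Σ_{p+q=n} 𝒜 p ⊗ 𝒜 q`. -/
def ComulGraded : Prop :=
  ∀ n : ℕ, ∀ x ∈ 𝒜 n,
    Coalgebra.comul (R := K) x ∈
      ⨆ pq : {pq : ℕ × ℕ // pq.1 + pq.2 = n},
        LinearMap.range (TensorProduct.map (𝒜 pq.1.1).subtype (𝒜 pq.1.2).subtype)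

/-- In a graded connected commutative Hopf algebra `H` over a field of characteristic zero,
if `x` lies in the `n`-th level of the coradical filtration (the `n`-fold iterated reduced
coproduct vanishes on `x`), then the `(n+1)`-fold convolution power of `σ = S ⋆ P`
vanishes on `x`. -/
theorem sigmaPow_succ_eq_zero_of_coradical
    [GradedAlgebra 𝒜] (hconn : 𝒜 0 = 1) (hgr : ComulGraded K H 𝒜)
    (n : ℕ) (x : H) (hx : DIter K H n x = 0) :
    sigmaPow K H (n + 1) x = 0 :=
  sigmaPow_key K H n x hx
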